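/- Let k ≥ 1 and c ≥ 1 be integers and let p ∈ (0,1) with q = 1 - p. For z ∈ ℕ let ℓ(p, z) = k·c·log(1-p) + z · log(1 - (1-p)^k). Then ∑_{z=0}^∞ C(c+z-1, z) · (q^k)^c · (1-q^k)^z · (∂³ℓ/∂p³)(p, z) = (kc/q³) · ( 2k² q^{2k}/(1-q^k)² + 3k(k-1) q^k/(1-q^k) + k(k-3) ), where ∂³ℓ/∂p³ denotes the third derivative of ℓ(·, z) with respect to p. -/

import Mathlib

private lemma stmt15_natid (n z : ℕ) :
    (z + 1) * ((z + 1 + n).choose (z + 1)) = (n + 1) * ((z + n + 1).choose (n + 1)) := by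
  have h3 : (z + n).choose z = (z + n).choose n := Nat.choose_symm_add
  have h1 := Nat.add_one_mul_choose_eq (z + n) z
  have h2 := Nat.add_one_mul_choose_eq (z + n) n
  have e1 : z + 1 + n = z + n + 1 := by omega
  rw [e1, mul_comm (z + 1), ← h1, h3, h2, mul_comm]

set_option maxHeartbeats 1000000 in
/-- Under model (c),
E[∂³ℓ/∂p³] = (kc/q³)·(2k²q^(2k)/(1-q^k)² + 3k(k-1)q^k/(1-q^k) + k(k-3)),
where q = 1 - p and ℓ(p,z) = k·c·log(1-p) + z·log(1-(1-p)^k). -/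
theorem stmt_15 (k c : ℕ) (hk : 1 ≤ k) (hc : 1 ≤ c) (p : ℝ)
    (hp : p ∈ Set.Ioo (0 : ℝ) 1) :
    HasSum (fun z : ℕ =>
      ((c + z - 1).choose z : ℝ) * ((1 - p) ^ k) ^ c * (1 - (1 - p) ^ k) ^ z *
        iteratedDeriv 3
          (fun t : ℝ => k * c * Real.log (1 - t) + z * Real.log (1 - (1 - t) ^ k)) p)
      ((k : ℝ) * c / (1 - p) ^ 3 *
        (2 * (k : ℝ) ^ 2 * (1 - p) ^ (2 * k) / (1 - (1 - p) ^ k) ^ 2 +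
          3 * (k : ℝ) * ((k : ℝ) - 1) * (1 - p) ^ k / (1 - (1 - p) ^ k) +
          (k : ℝ) * ((k : ℝ) - 3))) := by
  obtain ⟨hp0, hp1⟩ := hp
  obtain ⟨m, rfl⟩ : ∃ m, k = m + 1 := ⟨k - 1, by omega⟩
  obtain ⟨n, rfl⟩ : ∃ n, c = n + 1 := ⟨c - 1, by omega⟩
  clear hk hc
  -- basic positivity facts at a point of (0,1)
  have facts : ∀ t : ℝ, t ∈ Set.Ioo (0:ℝ) 1 →
      0 < 1 - t ∧ (1 - t) ^ (m+1) < 1 ∧ 0 < (1 - t) ^ (m+1) := by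
    intro t ht
    have h1 : (0:ℝ) < 1 - t := by linarith [ht.2]
    exact ⟨h1, pow_lt_one₀ h1.le (by linarith [ht.1]) (by omega), pow_pos h1 _⟩
  -- first derivative
  have step1 : ∀ (z : ℕ) (t : ℝ), t ∈ Set.Ioo (0:ℝ) 1 →
      HasDerivAt (fun t : ℝ => ((m+1:ℕ):ℝ) * ((n+1:ℕ):ℝ) * Real.log (1 - t)
            + (z:ℝ) * Real.log (1 - (1 - t) ^ (m+1)))
        (-(((m+1:ℕ):ℝ) * ((n+1:ℕ):ℝ)) / (1 - t)
          + (z:ℝ) * (((m+1:ℕ):ℝ) * (1 - t)^(m+1) / ((1 - t) * (1 - (1 - t)^(m+1))))) t := by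
    intro z t ht
    obtain ⟨ht1, hU1, hU0⟩ := facts t ht
    have hV0 : (0:ℝ) < 1 - (1 - t)^(m+1) := by linarith
    have hid : HasDerivAt (fun t : ℝ => 1 - t) (-1) t := by
      simpa using (hasDerivAt_id t).const_sub 1
    have hpow : HasDerivAt (fun t : ℝ => (1 - t)^(m+1)) (((m+1:ℕ):ℝ) * (1 - t)^m * (-1)) t := by
      have h := hid.pow (m+1)
      rwa [Nat.add_sub_cancel] at h
    have hlog1 : HasDerivAt (fun t : ℝ => Real.log (1 - t)) ((-1) / (1 - t)) t :=
      hid.log ht1.ne'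
    have hlog2 := (hpow.const_sub 1).log hV0.ne'
    have h := (hlog1.const_mul (((m+1:ℕ):ℝ) * ((n+1:ℕ):ℝ))).add (hlog2.const_mul (z:ℝ))
    convert h using 1
    · rfl
    · rfl
    · rfl
    field_simp
    ring
  -- second derivative
  have step2 : ∀ (z : ℕ) (t : ℝ), t ∈ Set.Ioo (0:ℝ) 1 →
      HasDerivAt (fun t : ℝ => -(((m+1:ℕ):ℝ) * ((n+1:ℕ):ℝ)) / (1 - t)
          + (z:ℝ) * (((m+1:ℕ):ℝ) * (1 - t)^(m+1) / ((1 - t) * (1 - (1 - t)^(m+1)))))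
        (-(((m+1:ℕ):ℝ) * ((n+1:ℕ):ℝ)) / (1 - t)^2
          + (z:ℝ) * (((m+1:ℕ):ℝ) * (1 - t)^(m+1)
              * (1 - ((m+1:ℕ):ℝ) - (1 - t)^(m+1))
              / ((1 - t)^2 * (1 - (1 - t)^(m+1))^2))) t := by
    intro z t ht
    obtain ⟨ht1, hU1, hU0⟩ := facts t ht
    have hV0 : (0:ℝ) < 1 - (1 - t)^(m+1) := by linarith
    have hid : HasDerivAt (fun t : ℝ => 1 - t) (-1) t := by
      simpa using (hasDerivAt_id t).const_sub 1
    have hpow : HasDerivAt (fun t : ℝ => (1 - t)^(m+1)) (((m+1:ℕ):ℝ) * (1 - t)^m * (-1)) t := by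
      have h := hid.pow (m+1)
      rwa [Nat.add_sub_cancel] at h
    have h1 := (hasDerivAt_const t (-(((m+1:ℕ):ℝ) * ((n+1:ℕ):ℝ)))).div hid ht1.ne'
    have h2 := ((hpow.const_mul (((m+1:ℕ):ℝ))).div (hid.mul (hpow.const_sub 1))
        (mul_pos ht1 hV0).ne')
    have h := h1.add (h2.const_mul (z:ℝ))
    convert h using 1
    · rfl
    · rfl
    · rfl
    simp only [Pi.mul_apply, Pi.pow_apply]
    field_simp
    ring
  -- third derivative
  have step3 : ∀ (z : ℕ) (t : ℝ), t ∈ Set.Ioo (0:ℝ) 1 →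
      HasDerivAt (fun t : ℝ => -(((m+1:ℕ):ℝ) * ((n+1:ℕ):ℝ)) / (1 - t)^2
          + (z:ℝ) * (((m+1:ℕ):ℝ) * (1 - t)^(m+1)
              * (1 - ((m+1:ℕ):ℝ) - (1 - t)^(m+1))
              / ((1 - t)^2 * (1 - (1 - t)^(m+1))^2)))
        (-(2 * ((m+1:ℕ):ℝ) * ((n+1:ℕ):ℝ)) / (1 - t)^3
          + (z:ℝ) * (((m+1:ℕ):ℝ) * (1 - t)^(m+1)
              * (2 * ((m+1:ℕ):ℝ)^2 * ((1 - t)^(m+1))^2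
                + 3 * ((m+1:ℕ):ℝ) * (((m+1:ℕ):ℝ) - 1) * (1 - t)^(m+1) * (1 - (1 - t)^(m+1))
                + (((m+1:ℕ):ℝ) * (((m+1:ℕ):ℝ) - 3) + 2) * (1 - (1 - t)^(m+1))^2)
              / ((1 - t)^3 * (1 - (1 - t)^(m+1))^3))) t := by
    intro z t ht
    obtain ⟨ht1, hU1, hU0⟩ := facts t ht
    have hV0 : (0:ℝ) < 1 - (1 - t)^(m+1) := by linarith
    have hid : HasDerivAt (fun t : ℝ => 1 - t) (-1) t := by
      simpa using (hasDerivAt_id t).const_sub 1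
    have hpow : HasDerivAt (fun t : ℝ => (1 - t)^(m+1)) (((m+1:ℕ):ℝ) * (1 - t)^m * (-1)) t := by
      have h := hid.pow (m+1)
      rwa [Nat.add_sub_cancel] at h
    have h1 := (hasDerivAt_const t (-(((m+1:ℕ):ℝ) * ((n+1:ℕ):ℝ)))).div (hid.pow 2)
        (pow_ne_zero 2 ht1.ne')
    have hN := (hpow.const_mul (((m+1:ℕ):ℝ))).mul
        (hpow.const_sub (1 - ((m+1:ℕ):ℝ)))
    have hD := (hid.pow 2).mul ((hpow.const_sub 1).pow 2)
    have h2 := hN.div hD (mul_pos (pow_pos ht1 2) (pow_pos hV0 2)).ne'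
    have h := h1.add (h2.const_mul (z:ℝ))
    convert h using 1
    · rfl
    · rfl
    · rfl
    simp only [Pi.mul_apply, Pi.pow_apply]
    field_simp
    ring
  -- value of the third iterated derivative at p
  have key : ∀ z : ℕ,
      iteratedDeriv 3 (fun t : ℝ => ((m+1:ℕ):ℝ) * ((n+1:ℕ):ℝ) * Real.log (1 - t)
          + (z:ℝ) * Real.log (1 - (1 - t) ^ (m+1))) p
      = -(2 * ((m+1:ℕ):ℝ) * ((n+1:ℕ):ℝ)) / (1 - p)^3
          + (z:ℝ) * (((m+1:ℕ):ℝ) * (1 - p)^(m+1)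
              * (2 * ((m+1:ℕ):ℝ)^2 * ((1 - p)^(m+1))^2
                + 3 * ((m+1:ℕ):ℝ) * (((m+1:ℕ):ℝ) - 1) * (1 - p)^(m+1) * (1 - (1 - p)^(m+1))
                + (((m+1:ℕ):ℝ) * (((m+1:ℕ):ℝ) - 3) + 2) * (1 - (1 - p)^(m+1))^2)
              / ((1 - p)^3 * (1 - (1 - p)^(m+1))^3)) := by
    intro z
    have hmem : Set.Ioo (0:ℝ) 1 ∈ nhds p := isOpen_Ioo.mem_nhds ⟨hp0, hp1⟩
    have h1 : deriv (fun t : ℝ => ((m+1:ℕ):ℝ) * ((n+1:ℕ):ℝ) * Real.log (1 - t)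
          + (z:ℝ) * Real.log (1 - (1 - t) ^ (m+1)))
        =ᶠ[nhds p] (fun t : ℝ => -(((m+1:ℕ):ℝ) * ((n+1:ℕ):ℝ)) / (1 - t)
          + (z:ℝ) * (((m+1:ℕ):ℝ) * (1 - t)^(m+1) / ((1 - t) * (1 - (1 - t)^(m+1))))) := by
      filter_upwards [hmem] with t ht using (step1 z t ht).deriv
    have h2 : deriv (deriv (fun t : ℝ => ((m+1:ℕ):ℝ) * ((n+1:ℕ):ℝ) * Real.log (1 - t)
          + (z:ℝ) * Real.log (1 - (1 - t) ^ (m+1))))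
        =ᶠ[nhds p] (fun t : ℝ => -(((m+1:ℕ):ℝ) * ((n+1:ℕ):ℝ)) / (1 - t)^2
          + (z:ℝ) * (((m+1:ℕ):ℝ) * (1 - t)^(m+1)
              * (1 - ((m+1:ℕ):ℝ) - (1 - t)^(m+1))
              / ((1 - t)^2 * (1 - (1 - t)^(m+1))^2))) := by
      refine h1.deriv.trans ?_
      filter_upwards [hmem] with t ht using (step2 z t ht).deriv
    rw [iteratedDeriv_succ, iteratedDeriv_succ, iteratedDeriv_one]
    rw [h2.deriv.eq_of_nhds]
    exact (step3 z p ⟨hp0, hp1⟩).deriv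
  -- infinite sums
  have hq1 : (0:ℝ) < 1 - p := by linarith
  obtain ⟨hqq, hU1, hU0⟩ := facts p ⟨hp0, hp1⟩
  have hV0 : (0:ℝ) < 1 - (1 - p)^(m+1) := by linarith
  have hV1 : 1 - (1 - p)^(m+1) < 1 := by linarith
  have hnorm : ‖1 - (1 - p)^(m+1)‖ < 1 := by
    rw [Real.norm_eq_abs, abs_of_pos hV0]; exact hV1
  have h1V : 1 - (1 - (1 - p)^(m+1)) = (1 - p)^(m+1) := by ring
  set A : ℝ := -(2 * ((m+1:ℕ):ℝ) * ((n+1:ℕ):ℝ)) / (1 - p)^3 with hA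
  set B : ℝ := ((m+1:ℕ):ℝ) * (1 - p)^(m+1)
      * (2 * ((m+1:ℕ):ℝ)^2 * ((1 - p)^(m+1))^2
        + 3 * ((m+1:ℕ):ℝ) * (((m+1:ℕ):ℝ) - 1) * (1 - p)^(m+1) * (1 - (1 - p)^(m+1))
        + (((m+1:ℕ):ℝ) * (((m+1:ℕ):ℝ) - 3) + 2) * (1 - (1 - p)^(m+1))^2)
      / ((1 - p)^3 * (1 - (1 - p)^(m+1))^3) with hB
  have HA : HasSum (fun z : ℕ => A * (((z+n).choose n : ℝ) * ((1 - p)^(m+1))^(n+1)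
      * (1 - (1 - p)^(m+1))^z)) A := by
    have H1 := hasSum_choose_mul_geometric_of_norm_lt_one n hnorm
    rw [h1V] at H1
    have h := H1.mul_left (A * ((1 - p)^(m+1))^(n+1))
    convert h using 1
    · rfl
    · funext z; ring
    · field_simp
  have HB : HasSum (fun z : ℕ => B * ((z:ℝ) * ((z+n).choose n : ℝ) * ((1 - p)^(m+1))^(n+1)
      * (1 - (1 - p)^(m+1))^z)) (B * (((n+1:ℕ):ℝ) * (1 - (1 - p)^(m+1)) / (1 - p)^(m+1))) := by
    have H2 := hasSum_choose_mul_geometric_of_norm_lt_one (n+1) hnorm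
    rw [h1V] at H2
    have h := H2.mul_left (B * ((n+1:ℕ):ℝ) * ((1 - p)^(m+1))^(n+1) * (1 - (1 - p)^(m+1)))
    have hfun : (fun z : ℕ => B * (((z+1:ℕ):ℝ) * (((z+1+n).choose n : ℝ)) * ((1 - p)^(m+1))^(n+1)
          * (1 - (1 - p)^(m+1))^(z+1)))
        = fun z : ℕ => B * ((n+1:ℕ):ℝ) * ((1 - p)^(m+1))^(n+1) * (1 - (1 - p)^(m+1))
          * (((z+(n+1)).choose (n+1) : ℝ) * (1 - (1 - p)^(m+1))^z) := by
      funext z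
      have hc : ((z+1+n).choose n) = ((z+1+n).choose (z+1)) := (Nat.choose_symm_add).symm
      have hni := stmt15_natid n z
      have hcast : ((z:ℝ)+1) * (((z+1+n).choose (z+1) : ℕ) : ℝ)
          = ((n:ℝ)+1) * (((z+n+1).choose (n+1) : ℕ) : ℝ) := by exact_mod_cast hni
      have e2 : z + (n+1) = z + n + 1 := by omega
      rw [hc, e2]
      push_cast
      linear_combination (B * ((1 - p)^(m+1))^(n+1) * (1 - (1 - p)^(m+1))^(z+1)) * hcast
    have h3 := (hasSum_nat_add_iff (f := fun z : ℕ => B * ((z:ℝ) * ((z+n).choose n : ℝ)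
        * ((1 - p)^(m+1))^(n+1) * (1 - (1 - p)^(m+1))^z)) 1).mp (by rw [← hfun] at h; exact h)
    convert h3 using 1
    · rfl
    rw [Finset.sum_range_one]
    norm_num
    field_simp
    ring
  have HS := HA.add HB
  convert HS using 1
  · funext z
    have hch : (((n+1) + z - 1).choose z : ℝ) = (((z+n).choose n : ℕ) : ℝ) := by
      have e : (n+1) + z - 1 = z + n := by omega
      rw [e, Nat.choose_symm_add]
    rw [key z, hch]
    ring
  · rw [hA, hB]
    field_simp
    ring
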